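/- The function w ↦ ρ_α(w) + w²/(2α) is convex on ℝ; i.e., the scaled MCP is semiconvex with semiconvexity modulus 1/α. -/

import Mathlib

/-- Scaled minimax concave penalty. -/
noncomputable def mcp (α w : ℝ) : ℝ :=
  if |w| ≤ α then |w| - w ^ 2 / (2 * α) else α / 2

private lemma convexOn_comp_univ {g f : ℝ → ℝ} {t : Set ℝ}
    (hg : ConvexOn ℝ t g) (hf : ConvexOn ℝ Set.univ f)
    (hmem : ∀ x, f x ∈ t) (hg' : MonotoneOn g t) :
    ConvexOn ℝ Set.univ (fun x => g (f x)) :=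
  ⟨convex_univ, fun x _ y _ a b ha hb hab =>
    (hg' (hmem _) (hg.1 (hmem x) (hmem y) ha hb hab)
      (hf.2 (Set.mem_univ x) (Set.mem_univ y) ha hb hab)).trans <|
      hg.2 (hmem x) (hmem y) ha hb hab⟩

private lemma habs : ConvexOn ℝ Set.univ (fun w : ℝ => |w|) := by
  exact (convexOn_univ_norm (E := ℝ))

theorem mcp_semiconvex (α : ℝ) (hα : 0 < α) :
    ConvexOn ℝ Set.univ (fun w : ℝ => mcp α w + w ^ 2 / (2 * α)) := by
  have h2α : (0:ℝ) < 2 * α := by linarith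
  have key : (fun w : ℝ => mcp α w + w ^ 2 / (2 * α)) =
      fun w : ℝ => |w| + (max (|w| - α) 0) ^ 2 / (2 * α) := by
    funext w
    unfold mcp
    by_cases h : |w| ≤ α
    · rw [if_pos h, max_eq_right (by linarith)]
      ring
    · push_neg at h
      rw [if_neg (not_le.mpr h), max_eq_left (by linarith)]
      have hw2 : |w| ^ 2 = w ^ 2 := sq_abs w
      field_simp
      nlinarith [sq_abs w]
  rw [key]
  -- m : w ↦ max (|w| - α) 0 is convex
  have hm : ConvexOn ℝ Set.univ (fun w : ℝ => max (|w| - α) 0) := by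
    have h1 : ConvexOn ℝ Set.univ (fun w : ℝ => |w| - α) :=
      habs.sub (concaveOn_const α convex_univ)
    exact h1.sup (convexOn_const 0 convex_univ)
  -- squared composition
  have hsq : ConvexOn ℝ Set.univ (fun w : ℝ => (max (|w| - α) 0) ^ 2) := by
    refine convexOn_comp_univ (g := fun x : ℝ => x ^ 2) (t := Set.Ici 0)
      (convexOn_pow 2) hm (fun x => Set.mem_Ici.mpr (le_max_right _ _)) ?_
    intro x hx y hy hxy
    exact pow_le_pow_left₀ hx hxy 2
  have hdiv : ConvexOn ℝ Set.univ (fun w : ℝ => (max (|w| - α) 0) ^ 2 / (2 * α)) := by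
    have := hsq.smul (c := (2 * α)⁻¹) (by positivity)
    simpa [div_eq_inv_mul, smul_eq_mul] using this
  exact habs.add hdiv
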